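/- The entropy of the quantized Laplace source, R(Λ,Q) = -p₀ log₂ p₀ - 2∑_{i=1}^∞ p_i log₂ p_i with p₀ = 1-e^{-ΛQ/2} and p_i = (1/2)e^{-ΛiQ}(e^{ΛQ/2} - e^{-ΛQ/2}), equals -(1-e^{-ΛQ/2})log₂(1-e^{-ΛQ/2}) - (e^{-ΛQ/2}/ln 2)[ln((1-e^{-ΛQ})/2) + ΛQ/2 - ΛQ/(1-e^{-ΛQ})]. -/

import Mathlib

/-- closed form of the entropy `R(Λ,Q)` of the quantized Laplace source. -/
theorem laplace_quantizer_entropy_closed_form (Λ Q : ℝ) (hΛ : 0 < Λ) (hQ : 0 < Q)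
    (p0 : ℝ) (hp0 : p0 = 1 - Real.exp (-Λ * Q / 2))
    (p : ℕ → ℝ)
    (hp : ∀ i : ℕ, p i = (1 / 2) * Real.exp (-Λ * (i : ℝ) * Q)
        * (Real.exp (Λ * Q / 2) - Real.exp (-Λ * Q / 2))) :
    -(p0 * Real.logb 2 p0) - 2 * ∑' i : ℕ, p (i + 1) * Real.logb 2 (p (i + 1))
      = -((1 - Real.exp (-Λ * Q / 2)) * Real.logb 2 (1 - Real.exp (-Λ * Q / 2)))
        - (Real.exp (-Λ * Q / 2) / Real.log 2)
          * (Real.log ((1 - Real.exp (-Λ * Q)) / 2) + Λ * Q / 2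
              - Λ * Q / (1 - Real.exp (-Λ * Q))) := by
  set E : ℝ := Real.exp (-Λ * Q / 2) with hEdef
  set a : ℝ := Real.exp (-Λ * Q) with hadef
  have hE : 0 < E := Real.exp_pos _
  have ha0 : 0 < a := Real.exp_pos _
  have ha1 : a < 1 := by
    rw [hadef, Real.exp_lt_one_iff]; nlinarith
  have h1a : 0 < 1 - a := by linarith
  set c : ℝ := (1 / 2) * E * (1 - a) with hcdef
  have hc : 0 < c := by positivity
  have hEa : E * E = a := by
    rw [hEdef, hadef, ← Real.exp_add]; ring_nf
  have hL : Real.log 2 ≠ 0 := by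
    have := Real.log_pos (by norm_num : (1:ℝ) < 2); linarith
  have key : ∀ i : ℕ, p (i + 1) = c * a ^ i := by
    intro i
    have h1 : Real.exp (-Λ * (↑(i + 1) : ℝ) * Q) = a * a ^ i := by
      rw [hadef, ← Real.exp_nat_mul, ← Real.exp_add]
      congr 1; push_cast; ring
    have h2 : Real.exp (Λ * Q / 2) * E = 1 := by
      rw [hEdef, ← Real.exp_add]; ring_nf; exact Real.exp_zero
    have h3 : a * (Real.exp (Λ * Q / 2) - E) = E * (1 - a) := by
      linear_combination (-Real.exp (Λ * Q / 2)) * hEa + E * h2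
    rw [hp, h1, hcdef]
    linear_combination (a ^ i / 2) * h3
  have hterm : ∀ i : ℕ, p (i + 1) * Real.logb 2 (p (i + 1))
      = (c * Real.log c / Real.log 2) * a ^ i
        + (c * Real.log a / Real.log 2) * ((i : ℝ) * a ^ i) := by
    intro i
    rw [key i, Real.logb, Real.log_mul hc.ne' (pow_pos ha0 i).ne', Real.log_pow]
    field_simp
  have hnorm : ‖a‖ < 1 := by rw [Real.norm_eq_abs, abs_of_pos ha0]; exact ha1
  have hsum1 : ∑' i : ℕ, a ^ i = (1 - a)⁻¹ := tsum_geometric_of_lt_one ha0.le ha1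
  have hsum2 : ∑' i : ℕ, (i : ℝ) * a ^ i = a / (1 - a) ^ 2 :=
    tsum_coe_mul_geometric_of_norm_lt_one hnorm
  have hS : ∑' i : ℕ, p (i + 1) * Real.logb 2 (p (i + 1))
      = (c * Real.log c / Real.log 2) * (1 - a)⁻¹
        + (c * Real.log a / Real.log 2) * (a / (1 - a) ^ 2) := by
    rw [tsum_congr hterm, Summable.tsum_add
        ((summable_geometric_of_lt_one ha0.le ha1).mul_left _)
        ((hasSum_coe_mul_geometric_of_norm_lt_one hnorm).summable.mul_left _),
      tsum_mul_left, tsum_mul_left, hsum1, hsum2]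
  have hloga : Real.log a = -Λ * Q := by rw [hadef, Real.log_exp]
  have hlogc : Real.log c = Real.log ((1 - a) / 2) + (-Λ * Q / 2) := by
    rw [hcdef, show (1 / 2 : ℝ) * E * (1 - a) = (1 - a) / 2 * E by ring,
      Real.log_mul (by positivity) hE.ne', hEdef, Real.log_exp]
  rw [hS, hp0, hloga, hlogc, hcdef]
  field_simp
  ring
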